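/- The set of bracket vectors of type A_n triangulations, ordered componentwise, forms a lattice in which the meet is the componentwise minimum and the join of r and s is the unique minimal bracket vector componentwise above max(r,s). -/

import Mathlib

/-- Condition (i) for type `A_n` bracket vectors (0-based indices). -/
def condIA (n : ℕ) (r : Fin (n + 1) → ℕ) : Prop :=
  ∀ i j : Fin (n + 1), i < j → (j : ℕ) - (i : ℕ) ≤ r j →
    r i + ((j : ℕ) - (i : ℕ)) ≤ r j

/-- Condition (ii): `0 ≤ r_i ≤ i - 1` (0-based: `r k ≤ k`). -/
def entriesA (n : ℕ) (r : Fin (n + 1) → ℕ) : Prop :=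
  ∀ k : Fin (n + 1), r k ≤ (k : ℕ)

/-- A type `A_n` bracket vector. -/
def isAVec (n : ℕ) (r : Fin (n + 1) → ℕ) : Prop := condIA n r ∧ entriesA n r

/-- The closure: minimal value at index `k` above `t k` compatible with previous values. -/
noncomputable def jfun (t : ℕ → ℕ) : ℕ → ℕ
  | k => sInf {m | t k ≤ m ∧ ∀ i, ∀ _ : i < k, k - i ≤ m → jfun t i + (k - i) ≤ m}
termination_by k => k

lemma jfun_le (t : ℕ → ℕ) (ht : ∀ k, t k ≤ k) : ∀ k, jfun t k ≤ k := by
  intro k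
  induction k using Nat.strong_induction_on with
  | _ k ih =>
    rw [jfun]
    apply Nat.sInf_le
    refine ⟨ht k, fun i hi _ => ?_⟩
    have := ih i hi
    omega

lemma jfun_nonempty (t : ℕ → ℕ) (ht : ∀ k, t k ≤ k) (k : ℕ) :
    {m | t k ≤ m ∧ ∀ i, ∀ _ : i < k, k - i ≤ m → jfun t i + (k - i) ≤ m}.Nonempty := by
  refine ⟨k, ht k, fun i hi _ => ?_⟩
  have := jfun_le t ht i
  omega

lemma jfun_mem (t : ℕ → ℕ) (ht : ∀ k, t k ≤ k) (k : ℕ) :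
    t k ≤ jfun t k ∧ ∀ i, ∀ _ : i < k, k - i ≤ jfun t k → jfun t i + (k - i) ≤ jfun t k := by
  have := Nat.sInf_mem (jfun_nonempty t ht k)
  rw [jfun]
  exact this

lemma jfun_min (t : ℕ → ℕ) (k m : ℕ)
    (h1 : t k ≤ m) (h2 : ∀ i, ∀ _ : i < k, k - i ≤ m → jfun t i + (k - i) ≤ m) :
    jfun t k ≤ m := by
  rw [jfun]; exact Nat.sInf_le ⟨h1, h2⟩

/-- The set of type `A_n` bracket vectors, ordered componentwise, is a lattice:
the componentwise minimum of two bracket vectors is again a bracket vector (hence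
is the meet), and there is a unique minimal bracket vector componentwise above
`max(r,s)` (which is the join). -/
theorem tamariA_lattice (n : ℕ) (r s : Fin (n + 1) → ℕ)
    (hr : isAVec n r) (hs : isAVec n s) :
    isAVec n (fun k => min (r k) (s k)) ∧
      ∃! j : Fin (n + 1) → ℕ, isAVec n j ∧ (fun k => max (r k) (s k)) ≤ j ∧
        ∀ h : Fin (n + 1) → ℕ, isAVec n h → (fun k => max (r k) (s k)) ≤ h → j ≤ h := by
  obtain ⟨hr1, hr2⟩ := hr
  obtain ⟨hs1, hs2⟩ := hs
  constructor
  · constructor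
    · intro i j hij hle
      simp only at hle ⊢
      have h1 := hr1 i j hij (le_trans hle (min_le_left _ _))
      have h2 := hs1 i j hij (le_trans hle (min_le_right _ _))
      omega
    · intro k
      have := hr2 k
      simp only
      omega
  · -- the join
    set t : ℕ → ℕ := fun k => if h : k < n + 1 then max (r ⟨k, h⟩) (s ⟨k, h⟩) else 0 with ht_def
    have ht : ∀ k, t k ≤ k := by
      intro k
      simp only [ht_def]
      split
      · next h =>
          have h1 := hr2 ⟨k, h⟩; have h2 := hs2 ⟨k, h⟩
          simp only [Fin.val_mk] at h1 h2; omega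
      · omega
    have htf : ∀ k : Fin (n + 1), t (k : ℕ) = max (r k) (s k) := by
      intro k; simp [ht_def, k.isLt]; intro h; have := k.isLt; omega
    set J : Fin (n + 1) → ℕ := fun k => jfun t (k : ℕ) with hJ_def
    have hJvec : isAVec n J := by
      constructor
      · intro i j hij hle
        exact (jfun_mem t ht (j : ℕ)).2 (i : ℕ) hij hle
      · intro k; exact jfun_le t ht (k : ℕ)
    have hJabove : (fun k => max (r k) (s k)) ≤ J := by
      intro k
      have := (jfun_mem t ht (k : ℕ)).1
      rw [htf k] at this
      exact this
    have hJmin : ∀ h : Fin (n + 1) → ℕ, isAVec n h →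
        (fun k => max (r k) (s k)) ≤ h → J ≤ h := by
      intro h hh hab k
      obtain ⟨hh1, hh2⟩ := hh
      -- strong induction on (k : ℕ)
      have key : ∀ m : ℕ, ∀ k : Fin (n + 1), (k : ℕ) = m → jfun t (k : ℕ) ≤ h k := by
        intro m
        induction m using Nat.strong_induction_on with
        | _ m ih =>
          intro k hk
          apply jfun_min
          · rw [htf k]; exact hab k
          · intro i hi hle
            have hi' : i < n + 1 := lt_trans hi k.isLt
            have hcond := hh1 ⟨i, hi'⟩ k (by simpa [Fin.lt_def] using hi) (by simpa using hle)
            have hIH : jfun t i ≤ h ⟨i, hi'⟩ := by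
              have := ih i (hk ▸ hi) ⟨i, hi'⟩ rfl
              simpa using this
            simp only [Fin.val_mk] at hcond
            omega
      exact key (k : ℕ) k rfl
    refine ⟨J, ⟨hJvec, hJabove, hJmin⟩, ?_⟩
    rintro j' ⟨hj'vec, hj'above, hj'min⟩
    exact le_antisymm (hj'min J hJvec hJabove) (hJmin j' hj'vec hj'above)
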